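/- Let a < b be real numbers, let ν_a, ν_b > 0, and let p ∈ [1, ∞) be a real number. Set ν := min(ν_a, ν_b). Then (∫_ℝ (e^{−ν_a (x−a)⁺} e^{−ν_b (x−b)⁻})^p dx)^{1/p} ≤ (2/(pν) + (b − a))^{1/p} e^{−ν (b − a)}. -/

import Mathlib

open Real MeasureTheory Set

private lemma intOn_Ioi (c b : ℝ) (hc : 0 < c) :
    IntegrableOn (fun x : ℝ => Real.exp (-(c * (x - b)))) (Ioi b) := by
  have h : IntegrableOn (fun x : ℝ => Real.exp (c * b) * Real.exp (-c * x)) (Ioi b) :=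
    (exp_neg_integrableOn_Ioi b hc).const_mul _
  refine h.congr_fun (fun x _ => ?_) measurableSet_Ioi
  dsimp only; rw [← Real.exp_add]; ring_nf

private lemma intVal_Ioi (c b : ℝ) (hc : 0 < c) :
    ∫ x : ℝ in Ioi b, Real.exp (-(c * (x - b))) = 1 / c := by
  have h1 : ∀ x : ℝ, Real.exp (-(c * (x - b))) = Real.exp (c * b) * Real.exp (-(c * x)) := by
    intro x; rw [← Real.exp_add]; ring_nf
  simp_rw [h1]
  rw [integral_const_mul]
  have h2 : (∫ x : ℝ in Ioi b, Real.exp (-(c * x)))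
      = c⁻¹ • ∫ x : ℝ in Ioi (c * b), Real.exp (-x) :=
    integral_comp_mul_left_Ioi (fun y => Real.exp (-y)) b hc
  rw [h2, integral_exp_neg_Ioi]
  rw [smul_eq_mul, Real.exp_neg]
  rw [one_div, mul_comm, mul_assoc, inv_mul_cancel₀ (Real.exp_ne_zero _), mul_one]

private lemma integrableOn_comp_neg {f : ℝ → ℝ} {s : Set ℝ} (hs : MeasurableSet s)
    (h : IntegrableOn f s) :
    IntegrableOn (fun x => f (-x)) ((fun x : ℝ => -x) ⁻¹' s) := by
  have A : MeasurableEmbedding (fun x : ℝ => -x) :=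
    (Homeomorph.neg ℝ).isClosedEmbedding.measurableEmbedding
  rw [IntegrableOn, ← Measure.map_neg_eq_self (volume : Measure ℝ)] at h
  rwa [Measure.restrict_map A.measurable hs, A.integrable_map_iff] at h

private lemma intOn_Iic (c a : ℝ) (hc : 0 < c) :
    IntegrableOn (fun x : ℝ => Real.exp (-(c * (a - x)))) (Iic a) := by
  have h : IntegrableOn (fun x : ℝ => Real.exp (-(c * (x - (-a))))) (Ici (-a)) := by
    rw [integrableOn_Ici_iff_integrableOn_Ioi]
    exact intOn_Ioi c (-a) hc
  have h2 := integrableOn_comp_neg measurableSet_Ici h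
  have hpre : (fun x : ℝ => -x) ⁻¹' (Ici (-a)) = Iic a := by
    ext x; simp
  rw [hpre] at h2
  refine h2.congr_fun (fun x _ => ?_) measurableSet_Iic
  ring_nf

private lemma intVal_Iic (c a : ℝ) (hc : 0 < c) :
    ∫ x : ℝ in Iic a, Real.exp (-(c * (a - x))) = 1 / c := by
  have h := integral_comp_neg_Iic a (fun x : ℝ => Real.exp (-(c * (x - (-a)))))
  simp only [show ∀ x : ℝ, -x - -a = a - x from fun x => by ring] at h
  rw [h, intVal_Ioi c (-a) hc]

theorem stmt_1 (a b νa νb p : ℝ) (hab : a < b) (hνa : 0 < νa) (hνb : 0 < νb)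
    (hp : 1 ≤ p) :
    (∫ x : ℝ, (Real.exp (-(νa * max (x - a) 0)) * Real.exp (-(νb * max (b - x) 0))) ^ p) ^ (1 / p)
      ≤ (2 / (p * min νa νb) + (b - a)) ^ (1 / p) * Real.exp (-(min νa νb * (b - a))) := by
  set ν := min νa νb with hν
  have hν0 : 0 < ν := lt_min hνa hνb
  have hp0 : 0 < p := lt_of_lt_of_le one_pos hp
  set c := p * ν with hc
  have hc0 : 0 < c := mul_pos hp0 hν0
  set G : ℝ → ℝ := fun x => Real.exp (-(c * max (a - x) 0)) * Real.exp (-(c * max (x - b) 0))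
    with hG
  have h1 : IntegrableOn G (Iic a) := by
    refine (intOn_Iic c a hc0).congr_fun (fun x hx => ?_) measurableSet_Iic
    simp only [mem_Iic] at hx
    rw [hG]
    simp only [max_eq_left (show (0:ℝ) ≤ a - x by linarith),
      max_eq_right (show x - b ≤ (0:ℝ) by linarith), mul_zero, neg_zero, Real.exp_zero, mul_one]
  have h2 : IntegrableOn G (Ioc a b) := by
    have hcst : IntegrableOn (fun _ : ℝ => (1:ℝ)) (Ioc a b) :=
      integrableOn_const measure_Ioc_lt_top.ne
    refine hcst.congr_fun (fun x hx => ?_) measurableSet_Ioc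
    obtain ⟨hx1, hx2⟩ := hx
    rw [hG]
    simp only [max_eq_right (show a - x ≤ (0:ℝ) by linarith),
      max_eq_right (show x - b ≤ (0:ℝ) by linarith), mul_zero, neg_zero, Real.exp_zero, mul_one]
  have h3 : IntegrableOn G (Ioi b) := by
    refine (intOn_Ioi c b hc0).congr_fun (fun x hx => ?_) measurableSet_Ioi
    simp only [mem_Ioi] at hx
    rw [hG]
    simp only [max_eq_right (show a - x ≤ (0:ℝ) by linarith),
      max_eq_left (show (0:ℝ) ≤ x - b by linarith), mul_zero, neg_zero, Real.exp_zero, one_mul]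
  have h23 : IntegrableOn G (Ioi a) := by
    have h := h2.union h3
    rwa [Ioc_union_Ioi_eq_Ioi hab.le] at h
  have hGint : Integrable G := by
    have h := h1.union h23
    rwa [Iic_union_Ioi, integrableOn_univ] at h
  have hval : ∫ x, G x = 2 / c + (b - a) := by
    rw [← intervalIntegral.integral_Iic_add_Ioi h1 h23,
      ← Ioc_union_Ioi_eq_Ioi hab.le,
      setIntegral_union (Ioc_disjoint_Ioi le_rfl) measurableSet_Ioi h2 h3]
    have v1 : ∫ x in Iic a, G x = 1 / c := by
      rw [← intVal_Iic c a hc0]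
      refine setIntegral_congr_fun measurableSet_Iic (fun x hx => ?_)
      simp only [mem_Iic] at hx
      rw [hG]
      simp only [max_eq_left (show (0:ℝ) ≤ a - x by linarith),
        max_eq_right (show x - b ≤ (0:ℝ) by linarith), mul_zero, neg_zero, Real.exp_zero,
        mul_one]
    have v2 : ∫ x in Ioc a b, G x = b - a := by
      have : ∫ x in Ioc a b, G x = ∫ _ in Ioc a b, (1:ℝ) := by
        refine setIntegral_congr_fun measurableSet_Ioc (fun x hx => ?_)
        obtain ⟨hx1, hx2⟩ := hx
        rw [hG]
        simp only [max_eq_right (show a - x ≤ (0:ℝ) by linarith),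
          max_eq_right (show x - b ≤ (0:ℝ) by linarith), mul_zero, neg_zero, Real.exp_zero,
          mul_one]
      rw [this, setIntegral_const, Real.volume_real_Ioc_of_le hab.le, smul_eq_mul, mul_one]
    have v3 : ∫ x in Ioi b, G x = 1 / c := by
      rw [← intVal_Ioi c b hc0]
      refine setIntegral_congr_fun measurableSet_Ioi (fun x hx => ?_)
      simp only [mem_Ioi] at hx
      rw [hG]
      simp only [max_eq_right (show a - x ≤ (0:ℝ) by linarith),
        max_eq_left (show (0:ℝ) ≤ x - b by linarith), mul_zero, neg_zero, Real.exp_zero,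
        one_mul]
    rw [v1, v2, v3]; ring
  have hpt : ∀ x : ℝ,
      (Real.exp (-(νa * max (x - a) 0)) * Real.exp (-(νb * max (b - x) 0))) ^ p
        ≤ Real.exp (-(c * (b - a))) * G x := by
    intro x
    rw [hG]
    dsimp only
    rw [← Real.exp_add, ← Real.exp_mul, ← Real.exp_add, ← Real.exp_add]
    apply Real.exp_le_exp.mpr
    have hνa' : ν ≤ νa := min_le_left _ _
    have hνb' : ν ≤ νb := min_le_right _ _
    rw [hc]
    rcases le_total x a with h | h
    · rw [max_eq_right (show x - a ≤ (0:ℝ) by linarith),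
        max_eq_left (show (0:ℝ) ≤ b - x by linarith),
        max_eq_left (show (0:ℝ) ≤ a - x by linarith),
        max_eq_right (show x - b ≤ (0:ℝ) by linarith)]
      nlinarith [mul_le_mul_of_nonneg_left
        (mul_le_mul_of_nonneg_right hνb' (show (0:ℝ) ≤ b - x by linarith)) hp0.le]
    · rcases le_total x b with h' | h'
      · rw [max_eq_left (show (0:ℝ) ≤ x - a by linarith),
          max_eq_left (show (0:ℝ) ≤ b - x by linarith),
          max_eq_right (show a - x ≤ (0:ℝ) by linarith),
          max_eq_right (show x - b ≤ (0:ℝ) by linarith)]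
        nlinarith [mul_le_mul_of_nonneg_left
          (mul_le_mul_of_nonneg_right hνa' (show (0:ℝ) ≤ x - a by linarith)) hp0.le,
          mul_le_mul_of_nonneg_left
          (mul_le_mul_of_nonneg_right hνb' (show (0:ℝ) ≤ b - x by linarith)) hp0.le]
      · rw [max_eq_left (show (0:ℝ) ≤ x - a by linarith),
          max_eq_right (show b - x ≤ (0:ℝ) by linarith),
          max_eq_right (show a - x ≤ (0:ℝ) by linarith),
          max_eq_left (show (0:ℝ) ≤ x - b by linarith)]
        nlinarith [mul_le_mul_of_nonneg_left
          (mul_le_mul_of_nonneg_right hνa' (show (0:ℝ) ≤ x - a by linarith)) hp0.le]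
  have hmono : (∫ x : ℝ,
      (Real.exp (-(νa * max (x - a) 0)) * Real.exp (-(νb * max (b - x) 0))) ^ p)
        ≤ Real.exp (-(c * (b - a))) * (2 / c + (b - a)) := by
    calc (∫ x : ℝ, (Real.exp (-(νa * max (x - a) 0)) * Real.exp (-(νb * max (b - x) 0))) ^ p)
        ≤ ∫ x : ℝ, Real.exp (-(c * (b - a))) * G x :=
          integral_mono_of_nonneg (ae_of_all _ fun x => Real.rpow_nonneg (by positivity) p)
            (hGint.const_mul _) (ae_of_all _ hpt)
      _ = Real.exp (-(c * (b - a))) * (2 / c + (b - a)) := by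
          rw [integral_const_mul, hval]
  have hL0 : (0:ℝ) ≤ ∫ x : ℝ,
      (Real.exp (-(νa * max (x - a) 0)) * Real.exp (-(νb * max (b - x) 0))) ^ p :=
    integral_nonneg fun x => by positivity
  have step := Real.rpow_le_rpow hL0 hmono (by positivity : (0:ℝ) ≤ 1 / p)
  refine le_trans step (le_of_eq ?_)
  rw [Real.mul_rpow (Real.exp_nonneg _) (add_nonneg (by positivity) (by linarith)), mul_comm]
  congr 1
  rw [← Real.exp_mul]
  congr 1
  rw [hc]
  field_simp
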